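/- Let A be a complex d×d matrix whose eigenvalues all lie in {z : |z| ≤ 1, |arg z| ≤ (1/24)²}, diagonalizable as A = P D P^{−1} with κ = ‖P‖‖P^{−1}‖, and let M_n be the monic Chebyshev polynomial of degree n. Then for all sufficiently large n and all t ≤ T, |Σ_{s=0}^{t−n−1} C M_n(A) A^s B u_{t−n−s}| ≤ 2^{−n/2} ‖C‖ ‖B‖ κ T, for any row vector C, column vector B, and scalars u with |u_j| ≤ 1. -/

import Mathlib

open Matrix Polynomial
open scoped Matrix.Norms.L2Operator

noncomputable def evec {d : ℕ} (v : Fin d → ℂ) : EuclideanSpace ℂ (Fin d) :=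
  (WithLp.equiv 2 (Fin d → ℂ)).symm v

/-- The monic Chebyshev polynomial `M_n = 2^{1-n} T_n` over `ℂ`. -/
noncomputable def monicCheb (n : ℕ) : ℂ[X] :=
  Polynomial.C ((2 : ℂ) ^ (1 - (n : ℤ))) * Polynomial.Chebyshev.T ℂ n

section Scalar
open Complex

lemma quad_max_bound (s v w : ℝ) (hs0 : 0 ≤ s) (hsle : s ≤ 1 + 1/288)
    (hsum : v + w = 2*s) (hmul : v*w = 1) : v ≤ (21/20)^2 := by
  have hvq : (v - s)^2 = s^2 - 1 := by linear_combination v*hsum - hmul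
  have h2 : v - s ≤ Real.sqrt (s^2-1) := by
    calc v - s ≤ |v - s| := le_abs_self _
      _ = Real.sqrt ((v-s)^2) := (Real.sqrt_sq_eq_abs _).symm
      _ = Real.sqrt (s^2-1) := by rw [hvq]
  have hsqrt : Real.sqrt (s^2 - 1) ≤ 9/100 := by
    have h1 : s^2 - 1 ≤ (9/100)^2 := by nlinarith
    calc Real.sqrt (s^2-1) ≤ Real.sqrt ((9/100)^2) := Real.sqrt_le_sqrt h1
      _ = 9/100 := Real.sqrt_sq (by norm_num)
  nlinarith

set_option maxHeartbeats 1000000 in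
lemma sector_uv_bound {z : ℂ} (hz1 : ‖z‖ ≤ 1) (hz2 : |Complex.arg z| ≤ 1/576)
    {b : ℂ} (hb : b * b = z^2 - 1) :
    ‖z + b‖ ≤ 21/20 ∧ ‖z - b‖ ≤ 21/20 := by
  have hr0 : 0 ≤ ‖z‖ := norm_nonneg z
  have him : z.im ^ 2 ≤ (‖z‖)^2 * (1/576)^2 := by
    have h1 : ‖z‖ * Real.sin (Complex.arg z) = z.im := Complex.norm_mul_sin_arg z
    have h2 : |Real.sin (Complex.arg z)| ≤ |Complex.arg z| := Real.abs_sin_le_abs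
    have h3 : |z.im| ≤ ‖z‖ * (1/576) := by
      rw [← h1, abs_mul, _root_.abs_of_nonneg hr0]
      exact mul_le_mul_of_nonneg_left (h2.trans hz2) hr0
    calc z.im^2 = |z.im|^2 := (_root_.sq_abs _).symm
      _ ≤ (‖z‖ * (1/576))^2 := by gcongr
      _ = (‖z‖)^2 * (1/576)^2 := by ring
  have hsq : z.re^2 + z.im^2 = (‖z‖)^2 := by
    rw [Complex.sq_norm, Complex.normSq_apply]; ring
  have hre2 : (z^2).re = z.re*z.re - z.im*z.im := by rw [pow_two, Complex.mul_re]
  have him2 : (z^2).im = z.re*z.im + z.im*z.re := by rw [pow_two, Complex.mul_im]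
  have hw : (‖z^2 - 1‖)^2 ≤ (1 - (‖z‖)^2 + 2*(1/576)*(‖z‖))^2 := by
    rw [Complex.sq_norm, Complex.normSq_apply]
    simp only [Complex.sub_re, Complex.sub_im, Complex.one_re, Complex.one_im, hre2, him2]
    nlinarith [him, hsq, sq_nonneg z.im, sq_nonneg z.re, sq_nonneg (1 - (‖z‖)^2), hr0, hz1]
  have hwle : ‖z^2 - 1‖ ≤ 1 - (‖z‖)^2 + 2*(1/576)*(‖z‖) := by
    have hc : 0 ≤ 1 - (‖z‖)^2 + 2*(1/576)*(‖z‖) := by nlinarith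
    nlinarith [norm_nonneg (z^2-1)]
  obtain ⟨s, hs⟩ : ∃ s : ℝ, s = (‖z‖)^2 + ‖z^2-1‖ := ⟨_, rfl⟩
  have hsle : s ≤ 1 + 1/288 := by
    have : (‖z‖)^2 ≤ 1 := by nlinarith
    rw [hs]; nlinarith
  have hs0 : 0 ≤ s := by rw [hs]; positivity
  have hbabs : (‖b‖)^2 = ‖z^2 - 1‖ := by
    rw [← hb, norm_mul]; ring
  have hxy_sum : (‖z+b‖)^2 + (‖z-b‖)^2 = 2*s := by
    rw [hs, ← hbabs]
    simp only [Complex.sq_norm, Complex.normSq_apply, Complex.add_re, Complex.add_im,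
      Complex.sub_re, Complex.sub_im]
    ring
  have hxy_mul : (‖z+b‖)^2 * (‖z-b‖)^2 = 1 := by
    have h1 : (z+b) * (z-b) = 1 := by linear_combination -hb
    have h2 := congrArg (fun x : ℂ => ‖x‖) h1
    rw [norm_mul, norm_one] at h2
    nlinarith [h2]
  have hxle := quad_max_bound s _ _ hs0 hsle hxy_sum hxy_mul
  have hyle := quad_max_bound s ((‖z-b‖)^2) ((‖z+b‖)^2) hs0 hsle (by linarith [hxy_sum]) (by nlinarith [hxy_mul])
  constructor
  · nlinarith [norm_nonneg (z+b)]
  · nlinarith [norm_nonneg (z-b)]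

lemma abs_cos_le (w : ℂ) : ‖Complex.cos w‖ ≤ Real.exp |w.im| := by
  rw [Complex.cos]
  calc ‖(Complex.exp (w*I) + Complex.exp (-w*I))/2‖
      ≤ (‖Complex.exp (w*I)‖ + ‖Complex.exp (-w*I)‖) / 2 := by
        rw [norm_div]; simp only [Complex.norm_two]; gcongr; exact norm_add_le _ _
    _ ≤ Real.exp |w.im| := by
        rw [Complex.norm_exp, Complex.norm_exp]
        have h1 : (w*I).re = -w.im := by simp
        have h2 : (-w*I).re = w.im := by simp
        rw [h1, h2]
        have e1 : Real.exp (-w.im) ≤ Real.exp |w.im| := Real.exp_le_exp.mpr (neg_le_abs _)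
        have e2 : Real.exp (w.im) ≤ Real.exp |w.im| := Real.exp_le_exp.mpr (le_abs_self _)
        linarith

lemma cheb_T_bound (n : ℕ) {z : ℂ} (hz1 : ‖z‖ ≤ 1)
    (hz2 : |Complex.arg z| ≤ 1/576) :
    ‖(Polynomial.Chebyshev.T ℂ n).eval z‖ ≤ (21/20)^n := by
  by_cases hz : z^2 - 1 = 0
  · have hz' : (z - 1) * (z + 1) = 0 := by linear_combination hz
    rcases mul_eq_zero.mp hz' with h | h
    · have hz1' : z = 1 := by linear_combination h
      subst hz1'
      have h0 : Complex.cos 0 = 1 := by simp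
      have := Polynomial.Chebyshev.T_complex_cos 0 (n : ℤ)
      rw [h0] at this
      rw [this]
      simp only [mul_zero, Complex.cos_zero, norm_one]
      exact one_le_pow₀ (by norm_num)
    · exfalso
      have hz1' : z = -1 := by linear_combination h
      rw [hz1', Complex.arg_neg_one] at hz2
      have := Real.pi_gt_three
      rw [abs_of_pos Real.pi_pos] at hz2
      linarith
  · set b : ℂ := (z^2 - 1) ^ ((1:ℂ)/2) with hbdef
    have hb : b * b = z^2 - 1 := by
      rw [hbdef, ← Complex.cpow_add _ _ hz]
      norm_num
    obtain ⟨hu1, hu2⟩ := sector_uv_bound hz1 hz2 hb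
    have huv : (z + b) * (z - b) = 1 := by linear_combination -hb
    have hu0 : z + b ≠ 0 := left_ne_zero_of_mul (huv ▸ one_ne_zero)
    have hinv : (z + b)⁻¹ = z - b := inv_eq_of_mul_eq_one_right huv
    set θ : ℂ := -I * Complex.log (z + b) with hθ
    have hcos : Complex.cos θ = z := by
      have h1 : θ * I = Complex.log (z + b) := by
        rw [hθ]; ring_nf; rw [Complex.I_sq]; ring
      have h2 : -θ * I = -Complex.log (z + b) := by
        rw [neg_mul, h1]
      rw [Complex.cos, h1, h2, Complex.exp_neg, Complex.exp_log hu0, hinv]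
      field_simp
      ring
    have hT : (Polynomial.Chebyshev.T ℂ n).eval z = Complex.cos (n * θ) := by
      rw [← hcos, Polynomial.Chebyshev.T_complex_cos θ (n : ℤ)]
      norm_num
    rw [hT]
    have hbound := abs_cos_le ((n : ℂ) * θ)
    have him : ((n : ℂ) * θ).im = n * θ.im := by simp
    have hθim : θ.im = -Real.log (‖z + b‖) := by
      rw [hθ]
      simp [Complex.log_im, Complex.log_re]
    rw [him, hθim] at hbound
    have habs : |(n : ℝ) * -Real.log (‖z+b‖)| = n * |Real.log (‖z+b‖)| := by
      rw [abs_mul, abs_neg, Nat.abs_cast]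
    rw [habs, Real.exp_nat_mul] at hbound
    refine hbound.trans ?_
    have hkey : Real.exp |Real.log (‖z+b‖)| ≤ 21/20 := by
      have hpos : 0 < ‖z + b‖ := norm_pos_iff.mpr hu0
      rcases le_or_gt 0 (Real.log (‖z+b‖)) with h | h
      · rw [_root_.abs_of_nonneg h, Real.exp_log hpos]; exact hu1
      · rw [_root_.abs_of_neg h, Real.exp_neg, Real.exp_log hpos]
        have hh : (‖z+b‖)⁻¹ = ‖z - b‖ := by rw [← norm_inv, hinv]
        rw [hh]; exact hu2
    exact pow_le_pow_left₀ (Real.exp_nonneg _) hkey n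


lemma monicCheb_bound {n : ℕ} (hn : 3 ≤ n) {z : ℂ} (hz1 : ‖z‖ ≤ 1)
    (hz2 : |Complex.arg z| ≤ 1/576) :
    ‖(monicCheb n).eval z‖ ≤ (2:ℝ)^(-(n:ℝ)/2) := by
  have heval : (monicCheb n).eval z
      = (2 : ℂ) ^ (1 - (n : ℤ)) * (Polynomial.Chebyshev.T ℂ n).eval z := by
    rw [monicCheb, Polynomial.eval_mul, Polynomial.eval_C]
  rw [heval, norm_mul, norm_zpow, Complex.norm_two]
  have hz : (2:ℝ) ^ (1 - (n:ℤ)) = 2 * ((1:ℝ)/2)^n := by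
    rw [zpow_sub₀ (by norm_num), zpow_one, zpow_natCast]
    field_simp
    rw [← mul_pow]; norm_num
  have hTb := cheb_T_bound n hz1 hz2
  have step1 : (2:ℝ) ^ (1 - (n:ℤ)) * ‖(Polynomial.Chebyshev.T ℂ n).eval z‖
      ≤ 2 * (21/40)^n := by
    rw [hz]
    have : 2 * ((1:ℝ)/2)^n * ‖(Polynomial.Chebyshev.T ℂ n).eval z‖
        ≤ 2 * ((1:ℝ)/2)^n * (21/20)^n := by
      gcongr
    refine this.trans (le_of_eq ?_)
    rw [mul_assoc, ← mul_pow]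
    norm_num
  refine step1.trans ?_
  have h1 : (2:ℝ) ≤ (4/3)^n := by
    calc (2:ℝ) ≤ (4/3)^3 := by norm_num
      _ ≤ (4/3)^n := pow_le_pow_right₀ (by norm_num) hn
  have h2 : 2*((21:ℝ)/40)^n ≤ (7/10)^n := by
    have he : ((7:ℝ)/10)^n = (4/3)^n * (21/40)^n := by rw [← mul_pow]; norm_num
    rw [he]
    exact mul_le_mul_of_nonneg_right h1 (by positivity)
  refine h2.trans ?_
  have hq : ((7:ℝ)/10) ≤ (2:ℝ)^(-(1:ℝ)/2) := by
    have hs : (2:ℝ)^(-(1:ℝ)/2) = (Real.sqrt 2)⁻¹ := by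
      rw [Real.sqrt_eq_rpow, ← Real.rpow_neg (by norm_num)]
      norm_num
    rw [hs]
    have h2' : Real.sqrt 2 ≤ 10/7 := by
      rw [show (10:ℝ)/7 = Real.sqrt ((10/7)^2) from (Real.sqrt_sq (by norm_num)).symm]
      exact Real.sqrt_le_sqrt (by norm_num)
    have hpos : (0:ℝ) < Real.sqrt 2 := Real.sqrt_pos.mpr (by norm_num)
    rw [show (7:ℝ)/10 = (10/7:ℝ)⁻¹ by norm_num]
    exact inv_anti₀ hpos h2'
  have hfin : ((2:ℝ)^(-(1:ℝ)/2))^n = (2:ℝ)^(-(n:ℝ)/2) := by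
    rw [← Real.rpow_natCast ((2:ℝ)^(-(1:ℝ)/2)) n, ← Real.rpow_mul (by norm_num)]
    congr 1
    ring
  rw [← hfin]
  exact pow_le_pow_left₀ (by norm_num) hq n

end Scalar

section MatrixPart

/-- conjugation by a unit as an AlgHom -/
noncomputable def conjAH {d : ℕ} (u : (Matrix (Fin d) (Fin d) ℂ)ˣ) :
    Matrix (Fin d) (Fin d) ℂ →ₐ[ℂ] Matrix (Fin d) (Fin d) ℂ where
  toFun M := ↑u * M * (↑(u⁻¹) : Matrix (Fin d) (Fin d) ℂ)
  map_one' := by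
    simp only [mul_one]
    exact u.mul_inv
  map_mul' x y := by
    set U : Matrix (Fin d) (Fin d) ℂ := ↑u with hU
    set V : Matrix (Fin d) (Fin d) ℂ := ↑(u⁻¹) with hV
    have h : V * U = 1 := u.inv_mul
    calc U * (x * y) * V = (U * x) * ((V * U) * (y * V)) := by rw [h]; noncomm_ring
      _ = (U * x * V) * (U * y * V) := by noncomm_ring
  map_zero' := by simp
  map_add' x y := by noncomm_ring
  commutes' r := by
    simp only [Algebra.algebraMap_eq_smul_one]
    set U : Matrix (Fin d) (Fin d) ℂ := ↑u with hU
    set V : Matrix (Fin d) (Fin d) ℂ := ↑(u⁻¹) with hV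
    have h : U * V = 1 := u.mul_inv
    rw [mul_smul_comm, smul_mul_assoc, mul_one, h]

lemma aeval_diagonal {d : ℕ} (v : Fin d → ℂ) (p : ℂ[X]) :
    (aeval (Matrix.diagonal v)) p = Matrix.diagonal (fun i => p.eval (v i)) := by
  have h1 : Matrix.diagonal v = Matrix.diagonalAlgHom ℂ v := rfl
  have h2 : ((aeval v) p : Fin d → ℂ) = fun i => p.eval (v i) := by
    funext i
    have h3 := Polynomial.aeval_algHom_apply (Pi.evalAlgHom ℂ (fun _ : Fin d => ℂ) i) v p
    simp only [Pi.evalAlgHom_apply] at h3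
    rw [← h3]
    exact congrFun (Polynomial.coe_aeval_eq_eval (v i)) p
  rw [h1, Polynomial.aeval_algHom_apply, Matrix.diagonalAlgHom_apply, h2]

lemma l2_opNorm_diagonal_le {d : ℕ} (g : Fin d → ℂ) (c : ℝ) (hc : 0 ≤ c)
    (h : ∀ i, ‖g i‖ ≤ c) : ‖Matrix.diagonal g‖ ≤ c := by
  rw [Matrix.l2_opNorm_def]
  refine ContinuousLinearMap.opNorm_le_bound _ hc ?_
  intro x
  rw [LinearEquiv.trans_apply]
  rw [show ((LinearMap.toContinuousLinearMap (Matrix.toEuclideanLin (Matrix.diagonal g))) x : EuclideanSpace ℂ (Fin d))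
      = Matrix.toEuclideanLin (Matrix.diagonal g) x from rfl]
  rw [Matrix.toEuclideanLin_apply]
  rw [EuclideanSpace.norm_eq, EuclideanSpace.norm_eq]
  rw [← Real.sqrt_sq hc, ← Real.sqrt_mul (by positivity)]
  apply Real.sqrt_le_sqrt
  rw [Finset.mul_sum]
  apply Finset.sum_le_sum
  intro i _
  have hmv : ((Matrix.diagonal g) *ᵥ (WithLp.equiv 2 (Fin d → ℂ)) x) i
      = g i * ((WithLp.equiv 2 (Fin d → ℂ)) x) i := Matrix.mulVec_diagonal _ _ _
  simp only [Matrix.mulVec_diagonal]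
  rw [norm_mul]
  have h1 : ‖g i‖ ≤ c := h i
  have h2 : ‖(WithLp.ofLp x) i‖ = ‖(x : EuclideanSpace ℂ (Fin d)) i‖ := rfl
  rw [h2]
  have h3 : ‖g i‖ * ‖(x : EuclideanSpace ℂ (Fin d)) i‖ ≤ c * ‖(x : EuclideanSpace ℂ (Fin d)) i‖ :=
    mul_le_mul_of_nonneg_right h1 (norm_nonneg _)
  calc (‖g i‖ * ‖(x : EuclideanSpace ℂ (Fin d)) i‖)^2
      ≤ (c * ‖(x : EuclideanSpace ℂ (Fin d)) i‖)^2 := by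
        apply pow_le_pow_left₀ (by positivity) h3
    _ = c^2 * ‖(x : EuclideanSpace ℂ (Fin d)) i‖^2 := by ring

lemma dotProduct_le {d : ℕ} (C w : Fin d → ℂ) :
    ‖C ⬝ᵥ w‖ ≤ ‖evec C‖ * ‖evec w‖ := by
  have hC : ‖evec (fun i => (starRingEnd ℂ) (C i))‖ = ‖evec C‖ := by
    rw [evec, evec, EuclideanSpace.norm_eq, EuclideanSpace.norm_eq]
    congr 1
    apply Finset.sum_congr rfl
    intro i _
    simp
  have hinner : (inner ℂ (evec (fun i => (starRingEnd ℂ) (C i))) (evec w) : ℂ) = C ⬝ᵥ w := by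
    rw [evec, evec, PiLp.inner_apply]
    simp only [RCLike.inner_apply, dotProduct]
    apply Finset.sum_congr rfl
    intro i _
    simp [mul_comm]
  calc ‖C ⬝ᵥ w‖ = ‖(inner ℂ (evec (fun i => (starRingEnd ℂ) (C i))) (evec w) : ℂ)‖ := by
        rw [hinner]
    _ ≤ ‖evec (fun i => (starRingEnd ℂ) (C i))‖ * ‖evec w‖ := norm_inner_le_norm _ _
    _ = ‖evec C‖ * ‖evec w‖ := by rw [hC]

lemma mulVec_norm_le {d : ℕ} (M : Matrix (Fin d) (Fin d) ℂ) (B : Fin d → ℂ) :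
    ‖evec (M.mulVec B)‖ ≤ ‖M‖ * ‖evec B‖ :=
  Matrix.l2_opNorm_mulVec M (evec B)

end MatrixPart

theorem usp_truncation_error_bound (d : ℕ)
    (A P D : Matrix (Fin d) (Fin d) ℂ)
    (hdiag : D.IsDiag) (hP : IsUnit P) (hA : A = P * D * P⁻¹)
    (hspec : ∀ μ ∈ spectrum ℂ A,
      ‖μ‖ ≤ 1 ∧ |Complex.arg μ| ≤ ((1 : ℝ) / 24) ^ 2) :
    ∃ N : ℕ, ∀ n : ℕ, N ≤ n → ∀ T t : ℕ, t ≤ T →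
      ∀ (C : Fin d → ℂ) (B : Fin d → ℂ) (u : ℕ → ℂ),
        (∀ j, ‖u j‖ ≤ 1) →
        ‖∑ s ∈ Finset.range (t - n),
            (C ⬝ᵥ ((aeval A) (monicCheb n) * A ^ s).mulVec B) * u (t - n - s)‖ ≤
          (2 : ℝ) ^ (-(n : ℝ) / 2) * ‖evec C‖ * ‖evec B‖ * (‖P‖ * ‖P⁻¹‖) * T := by
  refine ⟨3, ?_⟩
  intro n hn T t hT C B u hu
  obtain ⟨up, hup⟩ := hP
  have hPinv : (↑(up⁻¹) : Matrix (Fin d) (Fin d) ℂ) = P⁻¹ := by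
    rw [Matrix.coe_units_inv, hup]
  set v : Fin d → ℂ := fun i => D i i with hv
  have hDv : D = Matrix.diagonal v := hdiag.diagonal_diag.symm
  have hspecD : ∀ i, (v i) ∈ spectrum ℂ A := by
    intro i
    rw [hA, ← hPinv, ← hup, spectrum.units_conjugate, hDv, spectrum_diagonal]
    exact ⟨i, rfl⟩
  set c : ℝ := (2:ℝ)^(-(n:ℝ)/2) with hcdef
  have hc0 : 0 ≤ c := le_of_lt (Real.rpow_pos_of_pos two_pos _)
  have heig : ∀ s : ℕ, ∀ i, ‖(monicCheb n).eval (v i) * (v i)^s‖ ≤ c := by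
    intro s i
    obtain ⟨h1, h2⟩ := hspec (v i) (hspecD i)
    have h2' : |Complex.arg (v i)| ≤ 1/576 := by
      refine h2.trans (le_of_eq ?_); norm_num
    rw [norm_mul, norm_pow]
    have hm := monicCheb_bound hn h1 h2'
    calc ‖(monicCheb n).eval (v i)‖ * ‖v i‖ ^ s
        ≤ c * 1^s := by
          apply mul_le_mul hm (pow_le_pow_left₀ (norm_nonneg _) h1 s)
            (by positivity) hc0
      _ = c := by rw [one_pow, mul_one]
  have hconj : ∀ s : ℕ, (aeval A) (monicCheb n) * A ^ s
      = P * Matrix.diagonal (fun i => (monicCheb n).eval (v i) * (v i)^s) * P⁻¹ := by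
    intro s
    have hAf : A = conjAH up D := by
      show A = (↑up : Matrix (Fin d) (Fin d) ℂ) * D * (↑(up⁻¹) : Matrix (Fin d) (Fin d) ℂ)
      rw [hA, ← hPinv, ← hup]
    have hD : (aeval D) (monicCheb n) * D ^ s
        = Matrix.diagonal (fun i => (monicCheb n).eval (v i) * (v i)^s) := by
      rw [hDv, aeval_diagonal, Matrix.diagonal_pow, Matrix.diagonal_mul_diagonal]
      rfl
    calc (aeval A) (monicCheb n) * A ^ s
        = conjAH up ((aeval D) (monicCheb n)) * conjAH up (D^s) := by
          rw [hAf, Polynomial.aeval_algHom_apply, map_pow]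
      _ = conjAH up ((aeval D) (monicCheb n) * D^s) := (map_mul _ _ _).symm
      _ = ↑up * ((aeval D) (monicCheb n) * D^s) * ↑(up⁻¹) := rfl
      _ = P * Matrix.diagonal (fun i => (monicCheb n).eval (v i) * (v i)^s) * P⁻¹ := by
          rw [hup, hPinv, hD]
  have hMn : ∀ s : ℕ, ‖(aeval A) (monicCheb n) * A ^ s‖ ≤ ‖P‖ * c * ‖P⁻¹‖ := by
    intro s
    rw [hconj s]
    have hd : ‖Matrix.diagonal (fun i => (monicCheb n).eval (v i) * (v i)^s)‖ ≤ c :=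
      l2_opNorm_diagonal_le _ c hc0 (heig s)
    calc ‖P * Matrix.diagonal (fun i => (monicCheb n).eval (v i) * (v i)^s) * P⁻¹‖
        ≤ ‖P * Matrix.diagonal (fun i => (monicCheb n).eval (v i) * (v i)^s)‖ * ‖P⁻¹‖ :=
          Matrix.l2_opNorm_mul _ _
      _ ≤ (‖P‖ * ‖Matrix.diagonal (fun i => (monicCheb n).eval (v i) * (v i)^s)‖) * ‖P⁻¹‖ := by
          apply mul_le_mul_of_nonneg_right (Matrix.l2_opNorm_mul _ _) (norm_nonneg _)
      _ ≤ (‖P‖ * c) * ‖P⁻¹‖ := by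
          apply mul_le_mul_of_nonneg_right _ (norm_nonneg _)
          exact mul_le_mul_of_nonneg_left hd (norm_nonneg _)
  have hterm : ∀ s : ℕ, ‖C ⬝ᵥ ((aeval A) (monicCheb n) * A ^ s).mulVec B‖
      ≤ ‖evec C‖ * (‖P‖ * c * ‖P⁻¹‖ * ‖evec B‖) := by
    intro s
    calc ‖C ⬝ᵥ ((aeval A) (monicCheb n) * A ^ s).mulVec B‖
        ≤ ‖evec C‖ * ‖evec (((aeval A) (monicCheb n) * A ^ s).mulVec B)‖ := dotProduct_le _ _
      _ ≤ ‖evec C‖ * (‖(aeval A) (monicCheb n) * A ^ s‖ * ‖evec B‖) := by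
          apply mul_le_mul_of_nonneg_left (mulVec_norm_le _ _) (norm_nonneg _)
      _ ≤ ‖evec C‖ * (‖P‖ * c * ‖P⁻¹‖ * ‖evec B‖) := by
          apply mul_le_mul_of_nonneg_left _ (norm_nonneg _)
          exact mul_le_mul_of_nonneg_right (hMn s) (norm_nonneg _)
  set K : ℝ := ‖evec C‖ * (‖P‖ * c * ‖P⁻¹‖ * ‖evec B‖) with hK
  have hK0 : 0 ≤ K := by positivity
  calc ‖∑ s ∈ Finset.range (t - n),
          (C ⬝ᵥ ((aeval A) (monicCheb n) * A ^ s).mulVec B) * u (t - n - s)‖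
      ≤ ∑ s ∈ Finset.range (t - n),
          ‖(C ⬝ᵥ ((aeval A) (monicCheb n) * A ^ s).mulVec B) * u (t - n - s)‖ :=
        norm_sum_le _ _
    _ ≤ ∑ s ∈ Finset.range (t - n), K := by
        apply Finset.sum_le_sum
        intro s _
        rw [norm_mul]
        calc ‖C ⬝ᵥ ((aeval A) (monicCheb n) * A ^ s).mulVec B‖
              * ‖u (t - n - s)‖
            ≤ K * 1 := mul_le_mul (hterm s) (hu _) (norm_nonneg _) hK0
          _ = K := mul_one K
    _ = (t - n : ℕ) * K := by rw [Finset.sum_const, Finset.card_range, nsmul_eq_mul]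
    _ ≤ (T : ℝ) * K := by
        apply mul_le_mul_of_nonneg_right _ hK0
        exact_mod_cast le_trans (Nat.sub_le t n) hT
    _ = c * ‖evec C‖ * ‖evec B‖ * (‖P‖ * ‖P⁻¹‖) * T := by rw [hK]; ring
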